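/- arXiv:1510.01077 — 2 statements merged into one kernel-verified Lean document; each statement's English description precedes it below -/
import Mathlib

section
/- (Ground state of the anisotropic counterexample.) Let 0 < ε < 1/2, let D be the 2×2 real matrix with rows (1, -2ε) and (0, 1/ε), and J : ℝ² → ℝ, J(u) = ‖Du‖₁. Then the set of minimizers of J over the unit circle {u ∈ ℝ² : ‖u‖₂ = 1} is exactly {(1,0), (-1,0)}. -/
open Matrix

/-- `p` is a subgradient of `J` at `u` in `ℝ²`: `J v ≥ J u + ⟨p, v - u⟩` for all `v`. -/
def IsSubgradientAt (J : (Fin 2 → ℝ) → ℝ) (u p : Fin 2 → ℝ) : Prop :=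
  ∀ v : Fin 2 → ℝ, J v ≥ J u + p ⬝ᵥ (v - u)

lemma aniso_lb (ε a b : ℝ) (hε0 : 0 < ε) (hε : ε < 1 / 2) (hc : a ^ 2 + b ^ 2 = 1) :
    1 + (1 / ε - 2 * ε - 1) * |b| ≤ |a - 2 * ε * b| + |1 / ε * b| := by
  have h1 : |a| - |2 * ε * b| ≤ |a - 2 * ε * b| := abs_sub_abs_le_abs_sub _ _
  have h2 : |2 * ε * b| = 2 * ε * |b| := by
    rw [abs_mul, abs_of_pos (by linarith : (0:ℝ) < 2 * ε)]
  have h3 : |1 / ε * b| = 1 / ε * |b| := by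
    rw [abs_mul, abs_of_pos (by positivity : (0:ℝ) < 1 / ε)]
  have ha2 : a ^ 2 ≤ |a| := by
    nlinarith [abs_nonneg a, sq_abs a, abs_nonneg b, sq_abs b, sq_nonneg (|a| - 1)]
  have hb2 : b ^ 2 ≤ |b| := by
    nlinarith [abs_nonneg a, sq_abs a, abs_nonneg b, sq_abs b, sq_nonneg (|b| - 1)]
  -- |a| + |b| ≥ a² + b² = 1
  rw [h3]
  rw [h2] at h1
  linarith

lemma aniso_coef (ε : ℝ) (hε0 : 0 < ε) (hε : ε < 1 / 2) : 0 < 1 / ε - 2 * ε - 1 := by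
  have h : 2 < 1 / ε := by
    rw [lt_div_iff₀ hε0]; linarith
  linarith

/-- Ground state of the anisotropic counterexample: for `0 < ε < 1/2`,
`D = [[1, -2ε], [0, 1/ε]]` and `J(u) = ‖Du‖₁`, the minimizers of `J` over the unit
circle `{‖u‖₂ = 1}` are exactly `±(1,0)`. -/
theorem anisotropic_ground_state
    (ε : ℝ) (hε0 : 0 < ε) (hε : ε < 1 / 2)
    (D : Matrix (Fin 2) (Fin 2) ℝ) (hD : D = !![1, -2 * ε; 0, 1 / ε])
    (J : (Fin 2 → ℝ) → ℝ) (hJ : ∀ w, J w = ∑ i, |D.mulVec w i|) :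
    ∀ u : Fin 2 → ℝ,
      ((u 0) ^ 2 + (u 1) ^ 2 = 1 ∧
          ∀ w : Fin 2 → ℝ, (w 0) ^ 2 + (w 1) ^ 2 = 1 → J u ≤ J w) ↔
        (u = ![1, 0] ∨ u = ![-1, 0]) := by
  have hcoef := aniso_coef ε hε0 hε
  have hJ' : ∀ w : Fin 2 → ℝ, J w = |w 0 - 2 * ε * (w 1)| + |1 / ε * (w 1)| := by
    intro w
    rw [hJ, hD, Fin.sum_univ_two]
    simp [Matrix.mulVec, dotProduct, Fin.sum_univ_two]
    ring_nf
  intro u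
  constructor
  · rintro ⟨hc, hmin⟩
    have hle : J u ≤ 1 := by
      have := hmin ![1, 0] (by norm_num)
      rw [hJ' ![1,0]] at this
      simpa using this
    rw [hJ' u] at hle
    have hge := aniso_lb ε (u 0) (u 1) hε0 hε hc
    have hb0 : u 1 = 0 := by
      by_contra hb
      have hbpos : 0 < |u 1| := abs_pos.mpr hb
      nlinarith
    have ha : u 0 = 1 ∨ u 0 = -1 := by
      have h2 : (u 0 - 1) * (u 0 + 1) = 0 := by
        rw [hb0] at hc; nlinarith
      rcases mul_eq_zero.mp h2 with h | h
      · left; linarith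
      · right; linarith
    rcases ha with h | h
    · left; funext i; fin_cases i <;> simp [h, hb0]
    · right; funext i; fin_cases i <;> simp [h, hb0]
  · intro h
    have key : ∀ w : Fin 2 → ℝ, (w 0) ^ 2 + (w 1) ^ 2 = 1 → 1 ≤ J w := by
      intro w hw
      have := aniso_lb ε (w 0) (w 1) hε0 hε hw
      have hnn : 0 ≤ (1 / ε - 2 * ε - 1) * |w 1| :=
        mul_nonneg (by linarith) (abs_nonneg _)
      rw [hJ' w]
      linarith
    rcases h with h | h <;> subst h <;>
      refine ⟨by norm_num, fun w hw => ?_⟩ <;>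
      · have := key w hw
        rw [hJ']
        simp
        linarith
end

section
/- (Failure of the Rayleigh principle for the second eigenvalue.) Let 0 < ε < 1/2, let D be the 2×2 real matrix with rows (1, -2ε) and (0, 1/ε), and J : ℝ² → ℝ, J(u) = ‖Du‖₁. Then for v = (0,1), the unique vector orthogonal to the ground state (1,0) on the unit circle up to sign, there is no λ ∈ ℝ such that λ • v ∈ ∂J(v); indeed ∂J(v) = {(-1, 2ε + 1/ε)}. -/
open Matrix

/-- Failure of the Rayleigh principle for the second eigenvalue: for `0 < ε < 1/2`,
`D = [[1, -2ε], [0, 1/ε]]` and `J(u) = ‖Du‖₁`, the vector `v = (0,1)` (the unique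
unit vector orthogonal to the ground state `(1,0)` up to sign) has subdifferential
`∂J(v) = {(-1, 2ε + 1/ε)}`, and there is no `λ ∈ ℝ` with `λ • v ∈ ∂J(v)`. -/
theorem rayleigh_principle_fails_second_eigenvalue
    (ε : ℝ) (hε0 : 0 < ε) (hε : ε < 1 / 2)
    (D : Matrix (Fin 2) (Fin 2) ℝ) (hD : D = !![1, -2 * ε; 0, 1 / ε])
    (J : (Fin 2 → ℝ) → ℝ) (hJ : ∀ w, J w = ∑ i, |D.mulVec w i|) :
    (∀ p : Fin 2 → ℝ,
        IsSubgradientAt J ![0, 1] p ↔ p = ![-1, 2 * ε + 1 / ε]) ∧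
      ¬∃ lam : ℝ, IsSubgradientAt J ![0, 1] (lam • ![0, 1]) := by
  subst hD
  have hε' : (0:ℝ) < 1/ε := by positivity
  have hJ' : ∀ v : Fin 2 → ℝ, J v = |v 0 - 2*ε*(v 1)| + (1/ε) * |v 1| := by
    intro v
    rw [hJ]
    simp [Matrix.mulVec, dotProduct, Fin.sum_univ_two, abs_mul, abs_of_pos hε']
    rw [abs_of_pos hε0]
    ring_nf
  have hJu : J ![0, 1] = 2*ε + 1/ε := by
    rw [hJ']
    simp only [Matrix.cons_val_zero, Matrix.cons_val_one, Matrix.head_cons]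
    rw [show (0:ℝ) - 2*ε*1 = -(2*ε) by ring, abs_neg, abs_of_pos (by linarith), abs_one]
    ring
  have key : ∀ p : Fin 2 → ℝ, IsSubgradientAt J ![0,1] p →
      ∀ v : Fin 2 → ℝ, J v ≥ (2*ε + 1/ε) + (p 0 * v 0 + p 1 * (v 1 - 1)) := by
    intro p hp v
    have := hp v
    rw [hJu] at this
    simpa [dotProduct, Fin.sum_univ_two] using this
  have main : ∀ p : Fin 2 → ℝ,
      IsSubgradientAt J ![0, 1] p ↔ p = ![-1, 2 * ε + 1 / ε] := by
    intro p
    constructor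
    · intro hp
      have h1 := key p hp ![ε, 1]
      have h2 := key p hp ![-ε, 1]
      have h3 := key p hp ![0, 2]
      have h4 := key p hp ![0, 0]
      rw [hJ'] at h1 h2 h3 h4
      simp only [Matrix.cons_val_zero, Matrix.cons_val_one, Matrix.head_cons] at h1 h2 h3 h4
      rw [show ε - 2*ε*1 = -ε by ring, abs_neg, abs_of_pos hε0, abs_one] at h1
      rw [show -ε - 2*ε*1 = -(3*ε) by ring, abs_neg, abs_of_pos (by linarith), abs_one] at h2
      rw [show (0:ℝ) - 2*ε*2 = -(4*ε) by ring, abs_neg, abs_of_pos (by linarith),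
        show |(2:ℝ)| = 2 by norm_num] at h3
      simp only [mul_zero, sub_zero, zero_sub, abs_zero] at h4
      have e0 : p 0 = -1 := by
        have hp0le : p 0 ≤ -1 := by nlinarith
        have hp0ge : -1 ≤ p 0 := by nlinarith
        linarith
      have e1 : p 1 = 2 * ε + 1 / ε := by
        have hle : p 1 ≤ 2*ε + 1/ε := by nlinarith
        have hge : 2*ε + 1/ε ≤ p 1 := by nlinarith
        linarith
      funext i
      fin_cases i
      · exact e0
      · exact e1
    · intro hp
      subst hp
      intro v
      rw [hJ', hJu]
      simp only [dotProduct, Fin.sum_univ_two, Pi.sub_apply, Matrix.cons_val_zero,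
        Matrix.cons_val_one, Matrix.head_cons]
      have h1 : -(v 0 - 2*ε*(v 1)) ≤ |v 0 - 2*ε*(v 1)| := neg_le_abs _
      have h2 : v 1 ≤ |v 1| := le_abs_self _
      have h3 : (1/ε) * v 1 ≤ (1/ε) * |v 1| := mul_le_mul_of_nonneg_left h2 (le_of_lt hε')
      nlinarith
  refine ⟨main, ?_⟩
  rintro ⟨lam, h⟩
  rw [main] at h
  have := congrFun h 0
  simp at this
end
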